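/- Let 0 < ν < 1, η = √(1−ν²). The function ϑ(x) = arctan((x/η)/√(1−(x/η)²)) − ν·arctan(ν·(x/η)/√(1−(x/η)²)) is a strictly increasing bijection from (0, η) onto (0, (1−ν)·π/2), and satisfies ϑ'(x) = √(η² − x²)/(1 − x²) for x ∈ (0, η), i.e. ϑ(x) = ∫₀ˣ √(η² − y²)/(1 − y²) dy. -/

import Mathlib

open Real Set

/-- The WKB phase `ϑ` is a strictly increasing bijection from `(0, η)` onto
`(0, (1−ν)π/2)` with `ϑ'(x) = √(η² − x²)/(1 − x²)`, i.e. `ϑ(x) = ∫₀ˣ √(η²−y²)/(1−y²) dy`. -/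
theorem stmt17 (ν : ℝ) (hν0 : 0 < ν) (hν1 : ν < 1)
    (η : ℝ) (hη : η = Real.sqrt (1 - ν ^ 2))
    (ϑ : ℝ → ℝ)
    (hϑ : ∀ x : ℝ, ϑ x =
      Real.arctan ((x / η) / Real.sqrt (1 - (x / η) ^ 2)) -
        ν * Real.arctan (ν * ((x / η) / Real.sqrt (1 - (x / η) ^ 2)))) :
    StrictMonoOn ϑ (Ioo 0 η) ∧
    BijOn ϑ (Ioo 0 η) (Ioo 0 ((1 - ν) * π / 2)) ∧
    (∀ x ∈ Ioo 0 η, HasDerivAt ϑ (Real.sqrt (η ^ 2 - x ^ 2) / (1 - x ^ 2)) x) ∧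
    (∀ x ∈ Ioo 0 η, ϑ x = ∫ y in (0 : ℝ)..x, Real.sqrt (η ^ 2 - y ^ 2) / (1 - y ^ 2)) := by
  have hν2 : ν ^ 2 < 1 := by
    have : ν ^ 2 < 1 ^ 2 := sq_lt_sq' (by linarith) hν1
    simpa using this
  have hη2 : η ^ 2 = 1 - ν ^ 2 := by rw [hη]; exact Real.sq_sqrt (by linarith)
  have hη0 : 0 < η := by rw [hη]; exact Real.sqrt_pos.mpr (by linarith)
  have hνsq0 : 0 < ν ^ 2 := pow_pos hν0 2
  have hηsq1 : η ^ 2 < 1 := by rw [hη2]; linarith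
  have hη1 : η < 1 :=
    (abs_lt_of_sq_lt_sq' (by simpa using hηsq1) zero_le_one).2
  -- the key derivative computation
  have key : ∀ x : ℝ, x ^ 2 < η ^ 2 →
      HasDerivAt ϑ (Real.sqrt (η ^ 2 - x ^ 2) / (1 - x ^ 2)) x := by
    intro x hx
    have hx1 : x ^ 2 < 1 := lt_trans hx hηsq1
    have ht : (x / η) ^ 2 < 1 := by
      rw [div_pow, div_lt_one (by positivity)]; exact hx
    have hs0 : 0 < Real.sqrt (1 - (x / η) ^ 2) := Real.sqrt_pos.mpr (by linarith)
    set t := x / η with htdef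
    set s := Real.sqrt (1 - t ^ 2) with hsdef
    have hs2 : s ^ 2 = 1 - t ^ 2 := Real.sq_sqrt (by linarith)
    have hxt : x = η * t := by rw [htdef]; field_simp
    have hu : HasDerivAt (fun z : ℝ => z / η) (1 / η) x := by
      simpa using (hasDerivAt_id x).div_const η
    have hp : HasDerivAt (fun z : ℝ => 1 - (z / η) ^ 2) (-(2 * t ^ 1 * (1 / η))) x :=
      (hu.pow 2).const_sub 1
    have hw : HasDerivAt (fun z : ℝ => Real.sqrt (1 - (z / η) ^ 2))
        (-(2 * t ^ 1 * (1 / η)) / (2 * s)) x :=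
      hp.sqrt (ne_of_gt (by linarith : (0:ℝ) < 1 - (x / η) ^ 2))
    have hg : HasDerivAt (fun z : ℝ => (z / η) / Real.sqrt (1 - (z / η) ^ 2))
        ((1 / η * s - t * (-(2 * t ^ 1 * (1 / η)) / (2 * s))) / s ^ 2) x :=
      hu.div hw hs0.ne'
    have hA := hg.arctan
    have hB := (HasDerivAt.const_mul ν hg).arctan
    have hBB := HasDerivAt.const_mul ν hB
    have hfin := hA.sub hBB
    have hϑf : ϑ = fun z => Real.arctan ((z / η) / Real.sqrt (1 - (z / η) ^ 2)) -
        ν * Real.arctan (ν * ((z / η) / Real.sqrt (1 - (z / η) ^ 2))) := funext hϑ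
    rw [hϑf]
    refine hfin.congr_deriv (Eq.symm ?_)
    have hsq : Real.sqrt (η ^ 2 - x ^ 2) = η * s := by
      rw [show η ^ 2 - x ^ 2 = (η * s) ^ 2 by rw [hxt, mul_pow, mul_pow, hs2]; ring,
        Real.sqrt_sq (by positivity)]
    have h1x : (1 : ℝ) - x ^ 2 ≠ 0 := ne_of_gt (by linarith)
    simp only [← htdef, ← hsdef]
    rw [hsq, show x ^ 2 = η ^ 2 * t ^ 2 by rw [hxt]; ring]
    have h2 : (1 : ℝ) + (t / s) ^ 2 ≠ 0 := by positivity
    have h3 : (1 : ℝ) + (ν * (t / s)) ^ 2 ≠ 0 := by positivity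
    have h1x' : (1 : ℝ) - η ^ 2 * t ^ 2 ≠ 0 := by
      have hex2 : x ^ 2 = η ^ 2 * t ^ 2 := by rw [hxt]; ring
      rw [← hex2]; exact h1x
    have e1 : 1 + (t / s) ^ 2 = 1 / s ^ 2 := by
      field_simp
      linear_combination hs2
    have e2 : 1 + (ν * (t / s)) ^ 2 = (1 - η ^ 2 * t ^ 2) / s ^ 2 := by
      field_simp
      linear_combination hs2 + t ^ 2 * hη2
    have e3 : (1 / η * s - t * (-(2 * t ^ 1 * (1 / η)) / (2 * s))) / s ^ 2 = 1 / (η * s ^ 3) := by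
      field_simp
      linear_combination hs2
    rw [e1, e2, e3]
    field_simp
    linear_combination η ^ 2 * hs2 + hη2
  have hmem : ∀ x ∈ Ioo (0:ℝ) η, x ^ 2 < η ^ 2 := fun x hx =>
    sq_lt_sq' (by linarith [hx.1]) hx.2
  have hD : ∀ x ∈ Ioo (0:ℝ) η, HasDerivAt ϑ (Real.sqrt (η ^ 2 - x ^ 2) / (1 - x ^ 2)) x :=
    fun x hx => key x (hmem x hx)
  -- strict monotonicity
  have hmono : StrictMonoOn ϑ (Ioo 0 η) := by
    apply strictMonoOn_of_deriv_pos (convex_Ioo 0 η)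
    · exact fun x hx => (hD x hx).continuousAt.continuousWithinAt
    · intro x hx
      rw [interior_Ioo] at hx
      rw [(hD x hx).deriv]
      have h1 : 0 < Real.sqrt (η ^ 2 - x ^ 2) :=
        Real.sqrt_pos.mpr (by linarith [hmem x hx])
      have h2 : (0:ℝ) < 1 - x ^ 2 := by linarith [hmem x hx]
      positivity
  -- the auxiliary function h
  set h : ℝ → ℝ := fun y => Real.arctan y - ν * Real.arctan (ν * y) with hhdef
  have hhd : ∀ y : ℝ, HasDerivAt h ((1 - ν ^ 2) / ((1 + y ^ 2) * (1 + ν ^ 2 * y ^ 2))) y := by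
    intro y
    have h1 := Real.hasDerivAt_arctan y
    have h2 : HasDerivAt (fun y : ℝ => ν * y) ν y := by
      simpa using HasDerivAt.const_mul ν (hasDerivAt_id y)
    have h3 := HasDerivAt.const_mul ν h2.arctan
    have := h1.sub h3
    refine this.congr_deriv (Eq.symm ?_)
    have p1 : (0:ℝ) < 1 + y ^ 2 := by positivity
    have p2 : (0:ℝ) < 1 + (ν * y) ^ 2 := by positivity
    field_simp
    ring
  have hmonoh : StrictMono h :=
    strictMono_of_deriv_pos fun y => by
      rw [(hhd y).deriv]
      exact div_pos (by linarith) (by positivity)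
  have hconth : Continuous h := by
    exact Real.continuous_arctan.sub
      (continuous_const.mul (Real.continuous_arctan.comp (continuous_const.mul continuous_id)))
  have h0 : h 0 = 0 := by simp [hhdef]
  have htendh : Filter.Tendsto h Filter.atTop (nhds ((1 - ν) * π / 2)) := by
    have t1 : Filter.Tendsto Real.arctan Filter.atTop (nhds (π / 2)) :=
      Real.tendsto_arctan_atTop.mono_right nhdsWithin_le_nhds
    have t2 : Filter.Tendsto (fun y : ℝ => Real.arctan (ν * y)) Filter.atTop (nhds (π / 2)) :=
      t1.comp (Filter.tendsto_id.const_mul_atTop hν0)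
    have := t1.sub (t2.const_mul ν)
    rw [show (1 - ν) * π / 2 = π / 2 - ν * (π / 2) by ring]
    exact this
  have hleh : ∀ y, h y ≤ (1 - ν) * π / 2 := fun y =>
    hmonoh.monotone.ge_of_tendsto htendh y
  have hlth : ∀ y, h y < (1 - ν) * π / 2 := fun y =>
    lt_of_lt_of_le (hmonoh (lt_add_one y)) (hleh (y + 1))
  -- ϑ in terms of h
  have hgpos : ∀ x ∈ Ioo (0:ℝ) η, 0 < (x / η) / Real.sqrt (1 - (x / η) ^ 2) := by
    intro x hx
    have ht : (x / η) ^ 2 < 1 := by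
      rw [div_pow, div_lt_one (by positivity)]; exact hmem x hx
    have := Real.sqrt_pos.mpr (by linarith : (0:ℝ) < 1 - (x / η) ^ 2)
    exact div_pos (div_pos hx.1 hη0) this
  have hϑh : ∀ x : ℝ, ϑ x = h ((x / η) / Real.sqrt (1 - (x / η) ^ 2)) := fun x => hϑ x
  -- maps to
  have hmaps : MapsTo ϑ (Ioo 0 η) (Ioo 0 ((1 - ν) * π / 2)) := by
    intro x hx
    rw [mem_Ioo, hϑh x]
    constructor
    · have := hmonoh (hgpos x hx)
      rwa [h0] at this
    · exact hlth _
  -- surjectivity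
  have hsurj : SurjOn ϑ (Ioo 0 η) (Ioo 0 ((1 - ν) * π / 2)) := by
    intro c hc
    obtain ⟨b, hcb, hb0⟩ :=
      ((htendh.eventually (eventually_gt_nhds hc.2)).and (Filter.eventually_ge_atTop 0)).exists
    have hivt := intermediate_value_Ioo hb0 hconth.continuousOn
    have hcmem : c ∈ Ioo (h 0) (h b) := by rw [h0]; exact ⟨hc.1, hcb⟩
    obtain ⟨y, hy, hyc⟩ := hivt hcmem
    have hy0 : 0 < y := hy.1
    have hs1 : 0 < Real.sqrt (1 + y ^ 2) := Real.sqrt_pos.mpr (by positivity)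
    have hylt : y < Real.sqrt (1 + y ^ 2) := by
      rw [Real.lt_sqrt hy0.le]; linarith
    refine ⟨η * (y / Real.sqrt (1 + y ^ 2)), ⟨by positivity, ?_⟩, ?_⟩
    · have : y / Real.sqrt (1 + y ^ 2) < 1 := (div_lt_one hs1).mpr hylt
      exact mul_lt_of_lt_one_right hη0 this
    · set x := η * (y / Real.sqrt (1 + y ^ 2)) with hxdef
      have hq : x / η = y / Real.sqrt (1 + y ^ 2) := by
        rw [hxdef]; field_simp
      have h1q : 1 - (x / η) ^ 2 = (1 + y ^ 2)⁻¹ := by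
        rw [hq, div_pow, Real.sq_sqrt (by positivity : (0:ℝ) ≤ 1 + y ^ 2)]
        field_simp
        ring
      have hgx : (x / η) / Real.sqrt (1 - (x / η) ^ 2) = y := by
        rw [h1q, Real.sqrt_inv, hq]
        field_simp
      rw [hϑh x, hgx, hyc]
  -- ϑ 0 = 0
  have hϑ0 : ϑ 0 = 0 := by rw [hϑ 0]; simp
  -- integral representation
  have part4 : ∀ x ∈ Ioo (0:ℝ) η,
      ϑ x = ∫ y in (0:ℝ)..x, Real.sqrt (η ^ 2 - y ^ 2) / (1 - y ^ 2) := by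
    intro x hx
    have hsub : ∀ y ∈ uIcc (0:ℝ) x,
        HasDerivAt ϑ (Real.sqrt (η ^ 2 - y ^ 2) / (1 - y ^ 2)) y := by
      intro y hy
      rw [uIcc_of_le hx.1.le] at hy
      exact key y (sq_lt_sq' (by linarith [hy.1, hx.2]) (lt_of_le_of_lt hy.2 hx.2))
    have hint : IntervalIntegrable (fun y => Real.sqrt (η ^ 2 - y ^ 2) / (1 - y ^ 2))
        MeasureTheory.volume 0 x := by
      apply ContinuousOn.intervalIntegrable
      apply ContinuousOn.div
      · exact (Real.continuous_sqrt.comp (continuous_const.sub (continuous_pow 2))).continuousOn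
      · exact (continuous_const.sub (continuous_pow 2)).continuousOn
      · intro y hy
        rw [uIcc_of_le hx.1.le] at hy
        have hyη : y ^ 2 < η ^ 2 :=
          sq_lt_sq' (by linarith [hy.1, hx.2]) (lt_of_le_of_lt hy.2 hx.2)
        have : (0:ℝ) < 1 - y ^ 2 := by linarith
        exact this.ne'
    rw [intervalIntegral.integral_eq_sub_of_hasDerivAt hsub hint, hϑ0, sub_zero]
  exact ⟨hmono, ⟨hmaps, hmono.injOn, hsurj⟩, hD, part4⟩
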